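/- If G is an undirected bipartite graph, then the number of derangements on G equals the square of the number of perfect matchings of G. -/

import Mathlib

open SimpleGraph

namespace Stmt14Aux

variable {V : Type*} {G : SimpleGraph V}

lemma fin2_ne_zero : ∀ x : Fin 2, x ≠ 0 → x = 1 := by decide

lemma fin2_resolve : ∀ a b i : Fin 2, a ≠ b → b ≠ i → a = i := by decide

noncomputable def pmPartner {M : G.Subgraph} (h : M.IsPerfectMatching) (v : V) : V :=
  (h.1 (h.2 v)).choose

lemma pmPartner_adj {M : G.Subgraph} (h : M.IsPerfectMatching) (v : V) :
    M.Adj v (pmPartner h v) := (h.1 (h.2 v)).choose_spec.1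

lemma pmPartner_eq {M : G.Subgraph} (h : M.IsPerfectMatching) {v w : V}
    (hvw : M.Adj v w) : pmPartner h v = w :=
  ((h.1 (h.2 v)).choose_spec.2 w hvw).symm

lemma pmPartner_partner {M : G.Subgraph} (h : M.IsPerfectMatching) (v : V) :
    pmPartner h (pmPartner h v) = v :=
  pmPartner_eq h (pmPartner_adj h v).symm

def sgOf (C : G.Coloring (Fin 2)) {σ : Equiv.Perm V} (hσ : ∀ v, G.Adj v (σ v)) (i : Fin 2) :
    G.Subgraph where
  verts := Set.univ
  Adj v w := (C v = i ∧ σ v = w) ∨ (C w = i ∧ σ w = v)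
  adj_sub := by
    rintro v w (⟨_, rfl⟩ | ⟨_, rfl⟩)
    · exact hσ v
    · exact (hσ w).symm
  edge_vert := fun _ => Set.mem_univ _
  symm := ⟨fun v w h => Or.symm h⟩

lemma sgOf_isPM (C : G.Coloring (Fin 2)) {σ : Equiv.Perm V} (hσ : ∀ v, G.Adj v (σ v))
    (i : Fin 2) : (sgOf C hσ i).IsPerfectMatching := by
  constructor
  · intro v _
    by_cases hv : C v = i
    · refine ⟨σ v, Or.inl ⟨hv, rfl⟩, ?_⟩
      rintro y (⟨_, rfl⟩ | ⟨hy, hyv⟩)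
      · rfl
      · exact absurd (hy.trans hv.symm) (C.valid (hyv ▸ hσ y))
    · have hadj : G.Adj (σ.symm v) v := by
        have := hσ (σ.symm v); rwa [σ.apply_symm_apply] at this
      refine ⟨σ.symm v, Or.inr ⟨?_, σ.apply_symm_apply v⟩, ?_⟩
      · exact fin2_resolve _ _ _ (C.valid hadj) hv
      · rintro y (⟨hy, rfl⟩ | ⟨hy, hyv⟩)
        · exact absurd hy hv
        · have := congrArg σ.symm hyv
          simpa using this
  · exact fun v => Set.mem_univ v

noncomputable def permOf (C : G.Coloring (Fin 2)) {M₁ M₂ : G.Subgraph}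
    (h₁ : M₁.IsPerfectMatching) (h₂ : M₂.IsPerfectMatching) : Equiv.Perm V where
  toFun v := if C v = 0 then pmPartner h₁ v else pmPartner h₂ v
  invFun v := if C v = 0 then pmPartner h₂ v else pmPartner h₁ v
  left_inv v := by
    by_cases hv : C v = 0
    · have hadj : G.Adj v (pmPartner h₁ v) := M₁.adj_sub (pmPartner_adj h₁ v)
      have hne : C (pmPartner h₁ v) ≠ 0 := fun h => C.valid hadj (hv.trans h.symm)
      simp [hv, hne, pmPartner_partner]
    · have hadj : G.Adj v (pmPartner h₂ v) := M₂.adj_sub (pmPartner_adj h₂ v)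
      have hc : C (pmPartner h₂ v) = 0 :=
        fin2_resolve _ _ _ (Ne.symm (C.valid hadj)) hv
      simp [hv, hc, pmPartner_partner]
  right_inv v := by
    by_cases hv : C v = 0
    · have hadj : G.Adj v (pmPartner h₂ v) := M₂.adj_sub (pmPartner_adj h₂ v)
      have hne : C (pmPartner h₂ v) ≠ 0 := fun h => C.valid hadj (hv.trans h.symm)
      simp [hv, hne, pmPartner_partner]
    · have hadj : G.Adj v (pmPartner h₁ v) := M₁.adj_sub (pmPartner_adj h₁ v)
      have hc : C (pmPartner h₁ v) = 0 :=
        fin2_resolve _ _ _ (Ne.symm (C.valid hadj)) hv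
      simp [hv, hc, pmPartner_partner]

lemma permOf_adj (C : G.Coloring (Fin 2)) {M₁ M₂ : G.Subgraph}
    (h₁ : M₁.IsPerfectMatching) (h₂ : M₂.IsPerfectMatching) (v : V) :
    G.Adj v (permOf C h₁ h₂ v) := by
  by_cases hv : C v = 0
  · simpa [permOf, hv] using M₁.adj_sub (pmPartner_adj h₁ v)
  · simpa [permOf, hv] using M₂.adj_sub (pmPartner_adj h₂ v)

lemma sgOf_permOf (C : G.Coloring (Fin 2)) {M : G.Subgraph} {M₁ M₂ : G.Subgraph}
    (h₁ : M₁.IsPerfectMatching) (h₂ : M₂.IsPerfectMatching) (i : Fin 2)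
    (hM : M.IsPerfectMatching)
    (hpart : ∀ v, C v = i → permOf C h₁ h₂ v = pmPartner hM v) :
    sgOf C (fun v => permOf_adj C h₁ h₂ v) i = M := by
  apply SimpleGraph.Subgraph.ext
  · exact (Subgraph.isSpanning_iff.mp hM.2).symm
  · ext v w
    constructor
    · rintro (⟨hv, rfl⟩ | ⟨hw, hwv⟩)
      · rw [hpart v hv]; exact pmPartner_adj hM v
      · rw [hpart w hw] at hwv
        rw [← hwv]; exact (pmPartner_adj hM w).symm
    · intro h
      by_cases hv : C v = i
      · exact Or.inl ⟨hv, (hpart v hv).trans (pmPartner_eq hM h)⟩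
      · have hw : C w = i := fin2_resolve _ _ _ (Ne.symm (C.valid (M.adj_sub h))) hv
        exact Or.inr ⟨hw, (hpart w hw).trans (pmPartner_eq hM h.symm)⟩

noncomputable def mainEquiv (C : G.Coloring (Fin 2)) :
    {σ : Equiv.Perm V // ∀ v, G.Adj v (σ v)} ≃
      ({M : G.Subgraph // M.IsPerfectMatching} × {M : G.Subgraph // M.IsPerfectMatching}) where
  toFun p := (⟨sgOf C p.2 0, sgOf_isPM C p.2 0⟩, ⟨sgOf C p.2 1, sgOf_isPM C p.2 1⟩)
  invFun q := ⟨permOf C q.1.2 q.2.2, permOf_adj C q.1.2 q.2.2⟩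
  left_inv p := by
    obtain ⟨σ, hσ⟩ := p
    apply Subtype.ext
    apply Equiv.ext
    intro v
    show (if C v = 0 then pmPartner (sgOf_isPM C hσ 0) v else pmPartner (sgOf_isPM C hσ 1) v)
      = σ v
    by_cases hv : C v = 0
    · rw [if_pos hv]
      exact pmPartner_eq _ (Or.inl ⟨hv, rfl⟩)
    · rw [if_neg hv]
      have h1 : C v = 1 := fin2_ne_zero _ hv
      exact pmPartner_eq _ (Or.inl ⟨h1, rfl⟩)
  right_inv q := by
    obtain ⟨⟨M₁, h₁⟩, ⟨M₂, h₂⟩⟩ := q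
    have e1 : sgOf C (fun v => permOf_adj C h₁ h₂ v) 0 = M₁ := by
      apply sgOf_permOf C h₁ h₂ 0 h₁
      intro v hv
      show (if C v = 0 then pmPartner h₁ v else pmPartner h₂ v) = pmPartner h₁ v
      rw [if_pos hv]
    have e2 : sgOf C (fun v => permOf_adj C h₁ h₂ v) 1 = M₂ := by
      apply sgOf_permOf C h₁ h₂ 1 h₂
      intro v hv
      show (if C v = 0 then pmPartner h₁ v else pmPartner h₂ v) = pmPartner h₂ v
      rw [if_neg (by rw [hv]; decide)]
    exact Prod.ext (Subtype.ext e1) (Subtype.ext e2)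

end Stmt14Aux

/-- For an undirected bipartite graph, the number of derangements on the graph equals the
square of the number of perfect matchings. -/
theorem stmt_14 {V : Type*} [Fintype V] (G : SimpleGraph V) (hbip : G.Colorable 2) :
    {σ : Equiv.Perm V | ∀ v, G.Adj v (σ v)}.ncard =
      {M : G.Subgraph | M.IsPerfectMatching}.ncard ^ 2 := by
  classical
  obtain ⟨C⟩ := hbip
  rw [← Nat.card_coe_set_eq, ← Nat.card_coe_set_eq, sq, ← Nat.card_prod]
  exact Nat.card_congr (Stmt14Aux.mainEquiv C)
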